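/- The totally symmetric page and totally symmetric structure counts satisfy the recurrences: β_0 = 1, π_n = Σ_{i+j=n-1, i even} b^{((k-2)/2)}_{i/2} β_j for n ≥ 1, and β_n = (1/n) Σ_{j=0}^{n-1} β_j Σ_{d | n-j} d π_d for n ≥ 1, where π_n = [x^n] P̃(x), β_n = [x^n] T̃(x), and P̃(x) = x B̃((x^2))^{(k-2)/2} T̃(x), T̃(x) = exp(Σ_{j≥1} P̃(x^j)/j). -/

import Mathlib

namespace KGonal2Trees

open PowerSeries

/-- Composition of a power series `F` with `x^d`, i.e. the series `F(x^d)`. -/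
noncomputable def compXPow (d : ℕ) (F : PowerSeries ℚ) : PowerSeries ℚ :=
  PowerSeries.mk fun n => if d ∣ n then PowerSeries.coeff (n / d) F else 0

/-- Exponential `exp(S)` of a power series `S` with zero constant term:
`exp(S) = Σ_{m ≥ 0} S^m / m!` (the coefficient of `x^n` only involves `m ≤ n`). -/
noncomputable def expS (S : PowerSeries ℚ) : PowerSeries ℚ :=
  PowerSeries.mk fun n =>
    ∑ m ∈ Finset.range (n + 1), PowerSeries.coeff n (S ^ m) / (m.factorial : ℚ)

/-- The series `Σ_{i ≥ 1} x^i B(x^i)^(k-1) / i` (the `i`-th term has order `≥ i`, so the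
coefficient of `x^n` only involves `1 ≤ i ≤ n`). -/
noncomputable def seqB (k : ℕ) (B : PowerSeries ℚ) : PowerSeries ℚ :=
  PowerSeries.mk fun n =>
    ∑ i ∈ Finset.Icc 1 n,
      PowerSeries.coeff n (PowerSeries.X ^ i * compXPow i B ^ (k - 1)) / (i : ℚ)


lemma coeff_pow_eq_zero {S : PowerSeries ℚ} (hS : constantCoeff S = 0)
    {n m : ℕ} (h : n < m) : coeff n (S ^ m) = 0 := by
  have hx : (X : PowerSeries ℚ) ^ m ∣ S ^ m := pow_dvd_pow_of_dvd (X_dvd_iff.2 hS) m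
  exact X_pow_dvd_iff.mp hx n h

lemma coeff_expS_extend {S : PowerSeries ℚ} (hS : constantCoeff S = 0)
    {n N : ℕ} (h : n + 1 ≤ N) :
    coeff n (expS S) = ∑ m ∈ Finset.range N, coeff n (S ^ m) / (m.factorial : ℚ) := by
  rw [expS, coeff_mk]
  refine Finset.sum_subset (Finset.range_subset_range.2 h) ?_
  intro m _ hm
  rw [coeff_pow_eq_zero hS (by simpa using hm)]
  simp

lemma expS_deriv (S : PowerSeries ℚ) (hS : constantCoeff S = 0) (n : ℕ) :
    ((n + 1 : ℕ) : ℚ) * coeff (n + 1) (expS S) =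
      ∑ j ∈ Finset.range (n + 1),
        coeff j (expS S) * ((n + 1 - j : ℕ) : ℚ) * coeff (n + 1 - j) S := by
  have key : ∀ m : ℕ, ((n + 1 : ℕ) : ℚ) * coeff (n + 1) (S ^ m) =
      (m : ℚ) * coeff n (S ^ (m - 1) * S.derivativeFun) := by
    intro m
    have h1 : coeff n (d⁄dX ℚ (S ^ m)) = coeff (n + 1) (S ^ m) * (n + 1) :=
      coeff_derivative _ _
    have h2 : d⁄dX ℚ (S ^ m) = m • (S ^ (m - 1) • d⁄dX ℚ S) := Derivation.leibniz_pow (D := d⁄dX ℚ) (a := S) m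
    have h3 : d⁄dX ℚ S = S.derivativeFun := rfl
    rw [mul_comm, Nat.cast_add, Nat.cast_one, ← h1, h2, h3, smul_eq_mul]
    rw [nsmul_eq_mul, show ((m : ℚ⟦X⟧)) = C (m : ℚ) from (map_natCast C m).symm,
      coeff_C_mul]
  conv_lhs => rw [expS, coeff_mk]
  rw [Finset.mul_sum]
  have step1 : ∑ m ∈ Finset.range (n + 1 + 1),
      ((n + 1 : ℕ) : ℚ) * (coeff (n + 1) (S ^ m) / (m.factorial : ℚ)) =
      ∑ m ∈ Finset.range (n + 1), coeff n (S ^ m * S.derivativeFun) / (m.factorial : ℚ) := by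
    rw [Finset.sum_range_succ']
    have h0 : coeff (n+1) ((S:PowerSeries ℚ) ^ 0) = 0 := by simp
    rw [h0, zero_div, mul_zero, add_zero]
    refine Finset.sum_congr rfl fun m _ => ?_
    rw [← mul_div_assoc, key (m + 1), Nat.add_sub_cancel, Nat.factorial_succ]
    push_cast
    rw [mul_div_mul_left _ _ (by positivity : ((m:ℚ)+1) ≠ 0)]
  rw [step1]
  have step2 : ∀ m : ℕ, coeff n (S ^ m * S.derivativeFun) =
      ∑ a ∈ Finset.range (n + 1), coeff a (S ^ m) * coeff (n - a) S.derivativeFun := by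
    intro m
    rw [coeff_mul, Finset.Nat.sum_antidiagonal_eq_sum_range_succ_mk]
  simp only [step2, Finset.sum_div]
  rw [Finset.sum_comm]
  refine Finset.sum_congr rfl fun a ha => ?_
  have ha' : a ≤ n := Nat.lt_succ_iff.mp (Finset.mem_range.mp ha)
  rw [coeff_expS_extend hS (by omega : a + 1 ≤ n + 1)]
  rw [Finset.sum_mul, Finset.sum_mul]
  have : ∀ m ∈ Finset.range (n+1),
      coeff a (S ^ m) * coeff (n - a) S.derivativeFun / (m.factorial : ℚ) =
      coeff a (S ^ m) / (m.factorial : ℚ) * ((n + 1 - a : ℕ) : ℚ) * coeff (n + 1 - a) S := by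
    intro m _
    have h4 : n - a + 1 = n + 1 - a := by omega
    have hc : ((n - a : ℕ) : ℚ) + 1 = ((n + 1 - a : ℕ) : ℚ) := by
      rw [← h4, Nat.cast_add, Nat.cast_one]
    rw [show coeff (n - a) S.derivativeFun = coeff (n - a + 1) S * (((n - a : ℕ) : ℚ) + 1) from
        coeff_derivative S (n - a), h4, hc]
    ring
  exact Finset.sum_congr rfl this

lemma sum_range_dvd {M : Type*} [AddCommMonoid M] {d N : ℕ} (hd : 0 < d) (t : ℕ → M)
    (ht : ∀ i, ¬ d ∣ i → t i = 0) :
    ∑ i ∈ Finset.range (d * N + 1), t i = ∑ j ∈ Finset.range (N + 1), t (d * j) := by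
  rw [← Finset.sum_image (g := fun j => d * j) (f := t)
    (fun a _ b _ h => Nat.eq_of_mul_eq_mul_left hd h)]
  refine (Finset.sum_subset ?_ ?_).symm
  · intro x hx
    simp only [Finset.mem_image, Finset.mem_range] at hx ⊢
    obtain ⟨j, hj, rfl⟩ := hx
    calc d * j ≤ d * N := Nat.mul_le_mul_left d (by omega)
    _ < d * N + 1 := by omega
  · intro i hi hni
    refine ht i fun ⟨j, hj⟩ => hni ?_
    simp only [Finset.mem_image, Finset.mem_range] at hi ⊢
    refine ⟨j, ?_, hj.symm⟩
    have : d * j < d * N + 1 := hj ▸ hi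
    nlinarith

lemma compXPow_one {d : ℕ} (hd : 0 < d) : compXPow d 1 = 1 := by
  ext n
  rw [compXPow, coeff_mk]
  by_cases h : d ∣ n
  · rw [if_pos h, coeff_one, coeff_one]
    by_cases h0 : n = 0
    · simp [h0]
    · have : n / d ≠ 0 := fun hz => h0 (by rw [← Nat.div_mul_cancel h, hz, zero_mul])
      simp [h0, this]
  · rw [if_neg h, coeff_one, if_neg (fun h0 : n = 0 => h (h0 ▸ dvd_zero d))]

lemma compXPow_mul {d : ℕ} (hd : 0 < d) (F G : PowerSeries ℚ) :
    compXPow d (F * G) = compXPow d F * compXPow d G := by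
  ext n
  rw [coeff_mul, Finset.Nat.sum_antidiagonal_eq_sum_range_succ_mk, compXPow, coeff_mk]
  simp only [compXPow, coeff_mk]
  by_cases h : d ∣ n
  · obtain ⟨c, rfl⟩ := h
    rw [if_pos (Dvd.intro c rfl), Nat.mul_div_cancel_left c hd, coeff_mul,
      Finset.Nat.sum_antidiagonal_eq_sum_range_succ_mk]
    rw [sum_range_dvd hd _ (fun i hi => by rw [if_neg hi, zero_mul])]
    refine Finset.sum_congr rfl fun j hj => ?_
    have hj' : j ≤ c := Nat.lt_succ_iff.mp (Finset.mem_range.mp hj)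
    have hsub : d * c - d * j = d * (c - j) := (Nat.mul_sub_left_distrib d c j).symm
    rw [if_pos (Dvd.intro j rfl), Nat.mul_div_cancel_left j hd, hsub,
      if_pos (Dvd.intro (c - j) rfl), Nat.mul_div_cancel_left (c - j) hd]
  · rw [if_neg h]
    refine (Finset.sum_eq_zero fun i hi => ?_).symm
    by_cases hdi : d ∣ i
    · have : ¬ d ∣ (n - i) := fun hd2 => by
        have hi' : i ≤ n := Nat.lt_succ_iff.mp (Finset.mem_range.mp hi)
        exact h (by have := Nat.dvd_add hdi hd2; rwa [Nat.add_sub_cancel' hi'] at this)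
      rw [if_neg this, mul_zero]
    · rw [if_neg hdi, zero_mul]

lemma compXPow_pow {d : ℕ} (hd : 0 < d) (F : PowerSeries ℚ) (m : ℕ) :
    compXPow d (F ^ m) = compXPow d F ^ m := by
  induction m with
  | zero => simpa using compXPow_one hd
  | succ m ih => rw [pow_succ, compXPow_mul hd, ih, pow_succ]

lemma mul_coeff_S (P : PowerSeries ℚ) {m : ℕ} (hm : 1 ≤ m) :
    (m : ℚ) * coeff m (PowerSeries.mk fun n =>
      ∑ j ∈ Finset.Icc 1 n, coeff n (compXPow j P) / (j : ℚ)) =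
    ∑ d ∈ m.divisors, (d : ℚ) * coeff d P := by
  rw [coeff_mk, Finset.mul_sum]
  have hterm : ∀ j ∈ Finset.Icc 1 m,
      (m : ℚ) * (coeff m (compXPow j P) / (j : ℚ)) =
      if j ∣ m then ((m / j : ℕ) : ℚ) * coeff (m / j) P else 0 := by
    intro j hj
    have hj1 : 1 ≤ j := (Finset.mem_Icc.mp hj).1
    rw [compXPow, coeff_mk]
    by_cases h : j ∣ m
    · rw [if_pos h, if_pos h, Nat.cast_div h (by positivity)]
      ring
    · rw [if_neg h, if_neg h]; simp
  rw [Finset.sum_congr rfl hterm, ← Finset.sum_filter]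
  have hdiv : Finset.filter (fun j => j ∣ m) (Finset.Icc 1 m) = m.divisors := by
    ext d
    simp only [Finset.mem_filter, Finset.mem_Icc, Nat.mem_divisors]
    constructor
    · rintro ⟨⟨h1, h2⟩, h3⟩; exact ⟨h3, by omega⟩
    · rintro ⟨h3, h0⟩
      refine ⟨⟨Nat.one_le_iff_ne_zero.2 fun hd0 => ?_, Nat.le_of_dvd (by omega) h3⟩, h3⟩
      subst hd0; exact h0 (zero_dvd_iff.mp h3)
  rw [hdiv, ← Nat.sum_div_divisors m (fun d => (d : ℚ) * coeff d P)]


/-- For even `k ≥ 4`: if `P̃(x) = x B̃(x²)^((k-2)/2) T̃(x)` and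
`T̃(x) = exp(Σ_{j≥1} P̃(x^j)/j)`, then the coefficients `π_n = [xⁿ]P̃` and `β_n = [xⁿ]T̃`
satisfy `β_0 = 1`, `π_n = Σ_{i+j=n-1, i even} b^{((k-2)/2)}_{i/2} β_j`, and
`β_n = (1/n) Σ_{j=0}^{n-1} β_j Σ_{d ∣ n-j} d π_d`. -/
theorem totally_symmetric_recurrences (k : ℕ) (hk : 4 ≤ k) (heven : Even k)
    (B P T : PowerSeries ℚ)
    (hB : B = expS (seqB k B))
    (hP : P = PowerSeries.X * compXPow 2 B ^ ((k - 2) / 2) * T)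
    (hT : T = expS (PowerSeries.mk fun n =>
      ∑ j ∈ Finset.Icc 1 n, PowerSeries.coeff n (compXPow j P) / (j : ℚ))) :
    PowerSeries.coeff 0 T = 1 ∧
    (∀ n : ℕ, 1 ≤ n →
      PowerSeries.coeff n P =
        ∑ i ∈ (Finset.range n).filter (fun i => 2 ∣ i),
          PowerSeries.coeff (i / 2) (B ^ ((k - 2) / 2)) *
            PowerSeries.coeff (n - 1 - i) T) ∧
    ∀ n : ℕ, 1 ≤ n →
      PowerSeries.coeff n T =
        (1 / (n : ℚ)) * ∑ j ∈ Finset.range n,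
          PowerSeries.coeff j T *
            ∑ d ∈ (n - j).divisors, (d : ℚ) * PowerSeries.coeff d P := by
  have hS0 : constantCoeff (PowerSeries.mk fun n =>
      ∑ j ∈ Finset.Icc 1 n, coeff n (compXPow j P) / (j : ℚ)) = 0 := by
    rw [← coeff_zero_eq_constantCoeff_apply, coeff_mk]
    simp
  refine ⟨?_, ?_, ?_⟩
  · rw [hT, expS, coeff_mk]
    simp
  · intro n hn
    obtain ⟨n', rfl⟩ : ∃ n', n = n' + 1 := ⟨n - 1, by omega⟩
    rw [hP, mul_assoc, coeff_succ_X_mul, coeff_mul,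
      Finset.Nat.sum_antidiagonal_eq_sum_range_succ_mk,
      ← compXPow_pow (by norm_num) B ((k - 2) / 2), Finset.sum_filter]
    refine Finset.sum_congr rfl fun i hi => ?_
    rw [compXPow, coeff_mk]
    have h1 : n' + 1 - 1 - i = n' - i := by omega
    rw [h1]
    split_ifs with h <;> simp
  · intro n hn
    obtain ⟨n', rfl⟩ : ∃ n', n = n' + 1 := ⟨n - 1, by omega⟩
    have hrec := expS_deriv _ hS0 n'
    rw [← hT] at hrec
    have hsum : ∀ j ∈ Finset.range (n' + 1),
        coeff j T * ((n' + 1 - j : ℕ) : ℚ) * coeff (n' + 1 - j) (PowerSeries.mk fun n =>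
          ∑ j ∈ Finset.Icc 1 n, coeff n (compXPow j P) / (j : ℚ)) =
        coeff j T * ∑ d ∈ (n' + 1 - j).divisors, (d : ℚ) * coeff d P := by
      intro j hj
      rw [mul_assoc, mul_coeff_S P (by have := Finset.mem_range.mp hj; omega)]
    rw [Finset.sum_congr rfl hsum] at hrec
    rw [← hrec, one_div, ← mul_assoc, inv_mul_cancel₀ (by exact_mod_cast Nat.succ_ne_zero n'),
      one_mul]
end KGonal2Trees
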